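/- Let Γ be a group and F a finite normal subgroup of Γ such that the quotient Γ/F is virtually nilpotent (has a finite-index nilpotent subgroup). Then Γ is virtually nilpotent: Γ has a finite-index nilpotent subgroup. -/

import Mathlib

/-- A group is virtually nilpotent if it has a nilpotent subgroup of finite index. -/
def IsVirtuallyNilpotent (G : Type*) [Group G] : Prop :=
  ∃ H : Subgroup G, H.FiniteIndex ∧ Group.IsNilpotent H

/-- **Proposition (finite extensions of virtually nilpotent groups are virtually
nilpotent).** If `F` is a finite normal subgroup of `Γ` and `Γ/F` is virtually nilpotent,
then `Γ` is virtually nilpotent. -/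
theorem virtually_nilpotent_of_finite_extension
    {Γ : Type} [Group Γ] (F : Subgroup Γ) [F.Normal] (hF : Finite F)
    (h : IsVirtuallyNilpotent (Γ ⧸ F)) : IsVirtuallyNilpotent Γ := by
  obtain ⟨H, hHfi, hHnil⟩ := h
  -- the preimage of H in Γ
  let K : Subgroup Γ := H.comap (QuotientGroup.mk' F)
  have hKfi : K.FiniteIndex := by
    constructor
    rw [Subgroup.index_comap_of_surjective _ (QuotientGroup.mk'_surjective F)]
    exact hHfi.index_ne_zero
  -- the kernel of the conjugation action on F, a finite index subgroup
  let N : Subgroup Γ := (MulAut.conjNormal (H := F)).ker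
  have hNfi : N.FiniteIndex := by
    constructor
    rw [Subgroup.index_ker]
    have : Finite (MulAut F) := Finite.of_injective (MulEquiv.toEquiv : MulAut F → F ≃ F)
      (fun a b hab => MulEquiv.ext fun x => congrFun (congrArg DFunLike.coe hab) x)
    have : Finite (MulAut.conjNormal (H := F)).range := Subtype.finite
    exact Nat.card_ne_zero.mpr ⟨Nonempty.intro 1, this⟩
  refine ⟨N ⊓ K, inferInstance, ?_⟩
  -- the map from N ⊓ K to H
  have hmem : ∀ x : (N ⊓ K : Subgroup Γ), QuotientGroup.mk' F (x : Γ) ∈ H := fun x =>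
    x.2.2
  let f : (N ⊓ K : Subgroup Γ) →* H :=
    ((QuotientGroup.mk' F).comp (N ⊓ K).subtype).codRestrict H hmem
  refine @isNilpotent_of_ker_le_center _ _ _ _ f ?_ hHnil
  intro x hx
  have hxF : (x : Γ) ∈ F := by
    have : QuotientGroup.mk' F (x : Γ) = 1 := congrArg Subtype.val hx
    rwa [← QuotientGroup.ker_mk' F, MonoidHom.mem_ker]
  rw [Subgroup.mem_center_iff]
  intro y
  -- y ∈ N centralizes F, and x ∈ F
  have hyN : (y : Γ) ∈ N := y.2.1
  have : MulAut.conjNormal (y : Γ) = 1 := hyN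
  have hcomm : (y : Γ) * (x : Γ) * (y : Γ)⁻¹ = (x : Γ) := by
    have := congrArg (fun e : MulAut F => ((e ⟨x, hxF⟩ : F) : Γ)) this
    simpa [MulAut.conjNormal_apply] using this
  have : (y : Γ) * (x : Γ) = (x : Γ) * (y : Γ) := by
    have := congrArg (· * (y : Γ)) hcomm
    simpa [mul_assoc] using this
  exact Subtype.ext this
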